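/- arXiv:2304.13823 — 4 statements merged into one kernel-verified Lean document; each statement's English description precedes it below -/
import Mathlib

section
/- Let k ≥ 2 be an integer and let b_1, …, b_k be integers with b_i ≥ 2 for all i. Then, over ℚ, the loop matrix A_loop is invertible, and, setting Δ := b_1⋯b_k + (−1)^{k−1}, its inverse has entries: (A_loop^{-1})_{ij} = (−1)^{j−i}·(∏_{l < i} b_l)·(∏_{l > j} b_l)/Δ whenever i ≤ j, and (A_loop^{-1})_{ij} = (−1)^{k−i+j}·(∏_{j < l < i} b_l)/Δ whenever i > j. -/
/-- The loop matrix of exponents `b : Fin k → ℚ`: entries `b i` on the diagonal,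
`1` in positions `(i, i+1)` for `i = 0, …, k-2` and in position `(k-1, 0)`,
and `0` elsewhere. -/
def loopMatrix {k : ℕ} (b : Fin k → ℚ) : Matrix (Fin k) (Fin k) ℚ :=
  Matrix.of fun i j =>
    if i = j then b i
    else if j.val = i.val + 1 ∨ (i.val = k - 1 ∧ j.val = 0) then 1 else 0

set_option maxRecDepth 10000 in
/-- For integers `b i ≥ 2`, the loop matrix is invertible over `ℚ`, and with
`Δ = b 1 ⋯ b k + (-1)^(k-1)`, its inverse has entries
`(-1)^(j-i) * (∏_{l < i} b l) * (∏_{l > j} b l) / Δ` for `i ≤ j` and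
`(-1)^(k-i+j) * (∏_{j < l < i} b l) / Δ` for `i > j`. -/
theorem loopMatrix_inv {k : ℕ} (hk : 2 ≤ k) (b : Fin k → ℤ) (hb : ∀ i, 2 ≤ b i) :
    IsUnit (loopMatrix fun i => (b i : ℚ)) ∧
      ∀ i j : Fin k,
        (loopMatrix fun i => (b i : ℚ))⁻¹ i j =
          if i ≤ j then
            (-1 : ℚ) ^ (j.val - i.val) * (∏ l ∈ Finset.Iio i, (b l : ℚ)) *
              (∏ l ∈ Finset.Ioi j, (b l : ℚ)) /
              ((∏ i, (b i : ℚ)) + (-1 : ℚ) ^ (k - 1))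
          else
            (-1 : ℚ) ^ (k - i.val + j.val) * (∏ l ∈ Finset.Ioo j i, (b l : ℚ)) /
              ((∏ i, (b i : ℚ)) + (-1 : ℚ) ^ (k - 1)) := by
  obtain ⟨n, rfl⟩ : ∃ n, k = n + 2 := ⟨k - 2, by omega⟩
  have hq2 : ∀ i : Fin (n + 2), (2 : ℚ) ≤ (b i : ℚ) := fun i => by exact_mod_cast hb i
  set Δ : ℚ := (∏ i, (b i : ℚ)) + (-1 : ℚ) ^ (n + 2 - 1) with hΔdef
  have hΔ : Δ ≠ 0 := by
    have h1 : (2 : ℚ) ^ (n + 2) ≤ ∏ i, (b i : ℚ) := by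
      calc (2 : ℚ) ^ (n + 2) = ∏ _i : Fin (n + 2), (2 : ℚ) := by
            rw [Finset.prod_const, Finset.card_univ, Fintype.card_fin]
        _ ≤ ∏ i, (b i : ℚ) :=
            Finset.prod_le_prod (fun i _ => by norm_num) (fun i _ => hq2 i)
    have hp : (1 : ℚ) ≤ 2 ^ n := one_le_pow₀ (by norm_num)
    have h2 : (4 : ℚ) ≤ (2 : ℚ) ^ (n + 2) := by
      rw [pow_succ, pow_succ]; nlinarith
    have h3 : (-1 : ℚ) ≤ (-1 : ℚ) ^ (n + 2 - 1) := by
      rcases Nat.even_or_odd (n + 2 - 1) with h | h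
      · rw [h.neg_one_pow]; norm_num
      · rw [h.neg_one_pow]
    rw [hΔdef]; nlinarith
  set A : Matrix (Fin (n + 2)) (Fin (n + 2)) ℚ := loopMatrix (fun i => (b i : ℚ)) with hA
  set B : Matrix (Fin (n + 2)) (Fin (n + 2)) ℚ := Matrix.of (fun i j =>
    if i ≤ j then
      (-1 : ℚ) ^ (j.val - i.val) * (∏ l ∈ Finset.Iio i, (b l : ℚ)) *
        (∏ l ∈ Finset.Ioi j, (b l : ℚ)) / Δ
    else
      (-1 : ℚ) ^ (n + 2 - i.val + j.val) * (∏ l ∈ Finset.Ioo j i, (b l : ℚ)) / Δ) with hB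
  clear_value A B Δ
  have hmul : A * B = 1 := by
    ext i m
    rw [Matrix.mul_apply, Matrix.one_apply]
    have hi1 : (i + 1).val = (i.val + 1) % (n + 2) := by simp [Fin.add_def]
    have hcases : (i.val + 1 < n + 2 ∧ (i + 1).val = i.val + 1) ∨
        (i.val = n + 1 ∧ (i + 1).val = 0) := by
      rcases Nat.lt_or_ge (i.val + 1) (n + 2) with h | h
      · exact Or.inl ⟨h, by rw [hi1, Nat.mod_eq_of_lt h]⟩
      · have hv : i.val = n + 1 := by have := i.isLt; omega
        refine Or.inr ⟨hv, ?_⟩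
        rw [hi1, hv]
        exact Nat.mod_self (n + 2)
    have hii : i + 1 ≠ i := by
      intro h
      have hc := congrArg Fin.val h
      rcases hcases with ⟨_, h2⟩ | ⟨h1, h2⟩ <;> omega
    have hsum : ∀ j : Fin (n + 2), A i j * B j m =
        (if j = i then (b i : ℚ) * B i m else 0) +
        (if j = i + 1 then B (i + 1) m else 0) := by
      intro j
      have hcond : (j.val = i.val + 1 ∨ (i.val = n + 2 - 1 ∧ j.val = 0)) ↔ j = i + 1 := by
        rw [Fin.ext_iff]
        rcases hcases with ⟨h1, h2⟩ | ⟨h1, h2⟩ <;> rw [h2] <;>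
          (have := j.isLt; have := i.isLt; omega)
      rw [hA]
      simp only [loopMatrix, Matrix.of_apply]
      by_cases h1 : i = j
      · subst h1
        rw [if_pos rfl, if_pos rfl, if_neg (Ne.symm hii), add_zero]
      · by_cases h2 : j = i + 1
        · rw [if_neg h1, if_pos (hcond.mpr h2), if_neg (show ¬j = i from fun h => h1 h.symm),
            if_pos h2, one_mul, zero_add, h2]
        · rw [if_neg h1, if_neg (fun hh => h2 (hcond.mp hh)),
            if_neg (show ¬j = i from fun h => h1 h.symm), if_neg h2, zero_mul, zero_add]
    calc ∑ j, A i j * B j m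
        = ∑ j, ((if j = i then (b i : ℚ) * B i m else 0) +
            (if j = i + 1 then B (i + 1) m else 0)) :=
          Finset.sum_congr rfl fun j _ => hsum j
      _ = (b i : ℚ) * B i m + B (i + 1) m := by
          rw [Finset.sum_add_distrib, Finset.sum_ite_eq', Finset.sum_ite_eq']
          simp
      _ = if i = m then 1 else 0 := by
          rw [hB]
          simp only [Matrix.of_apply]
          rcases hcases with ⟨hlt, hval⟩ | ⟨hlast, hval⟩
          · rcases lt_trichotomy i.val m.val with hm | hm | hm
            · rw [if_pos (show i ≤ m from by rw [Fin.le_def]; omega),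
                  if_pos (show i + 1 ≤ m from by rw [Fin.le_def]; omega),
                  if_neg (show ¬ i = m from by rw [Fin.ext_iff]; omega)]
              have hIio : ∏ l ∈ Finset.Iio (i + 1), (b l : ℚ) =
                  (∏ l ∈ Finset.Iio i, (b l : ℚ)) * (b i : ℚ) := by
                have hins : Finset.Iio (i + 1) = insert i (Finset.Iio i) := by
                  ext l
                  simp only [Finset.mem_Iio, Finset.mem_insert, Fin.lt_def, Fin.ext_iff, hval]
                  omega
                rw [hins, Finset.prod_insert (by simp)]
                ring
              rw [hIio, hval]
              have hpow : (-1 : ℚ) ^ (m.val - i.val) =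
                  (-1 : ℚ) ^ (m.val - (i.val + 1)) * (-1) := by
                have h' : m.val - i.val = (m.val - (i.val + 1)) + 1 := by omega
                rw [h', pow_succ]
              rw [hpow]
              field_simp
              ring
            · have him : i = m := Fin.ext hm
              subst him
              rw [if_pos (le_refl i),
                  if_neg (show ¬ i + 1 ≤ i from by rw [Fin.le_def]; omega),
                  if_pos rfl]
              have h0 : Finset.Ioo i (i + 1) = (∅ : Finset (Fin (n + 2))) := by
                ext l
                simp only [Finset.mem_Ioo, Finset.notMem_empty, iff_false, not_and,
                  Fin.lt_def, hval]
                omega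
              have hexp : n + 2 - (i + 1).val + i.val = n + 1 := by rw [hval]; omega
              have hsplit : ∏ l, (b l : ℚ) =
                  (∏ l ∈ Finset.Iio i, (b l : ℚ)) * (b i : ℚ) *
                    ∏ l ∈ Finset.Ioi i, (b l : ℚ) := by
                have hu : (Finset.univ : Finset (Fin (n + 2))) =
                    insert i (Finset.Iio i) ∪ Finset.Ioi i := by
                  ext l
                  simp only [Finset.mem_univ, Finset.mem_union, Finset.mem_insert,
                    Finset.mem_Iio, Finset.mem_Ioi, Fin.lt_def, Fin.ext_iff, true_iff]
                  omega
                have hd : Disjoint (insert i (Finset.Iio i)) (Finset.Ioi i) := by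
                  rw [Finset.disjoint_right]
                  intro l hl
                  simp only [Finset.mem_Ioi, Fin.lt_def] at hl
                  simp only [Finset.mem_insert, Finset.mem_Iio, Fin.lt_def, Fin.ext_iff]
                  omega
                rw [hu, Finset.prod_union hd, Finset.prod_insert (by simp)]
                ring
              rw [h0, hexp, Finset.prod_empty]
              simp only [Nat.sub_self, pow_zero]
              field_simp
              rw [hΔdef, hsplit]
              have : n + 2 - 1 = n + 1 := rfl
              rw [this]
              ring
            · rw [if_neg (show ¬ i ≤ m from by rw [Fin.le_def]; omega),
                  if_neg (show ¬ i + 1 ≤ m from by rw [Fin.le_def]; omega),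
                  if_neg (show ¬ i = m from by rw [Fin.ext_iff]; omega)]
              have hIoo : ∏ l ∈ Finset.Ioo m (i + 1), (b l : ℚ) =
                  (∏ l ∈ Finset.Ioo m i, (b l : ℚ)) * (b i : ℚ) := by
                have hins : Finset.Ioo m (i + 1) = insert i (Finset.Ioo m i) := by
                  ext l
                  simp only [Finset.mem_Ioo, Finset.mem_insert, Fin.lt_def, Fin.ext_iff, hval]
                  omega
                rw [hins, Finset.prod_insert (by simp only [Finset.mem_Ioo, Fin.lt_def, not_and]; omega)]
                ring
              rw [hIoo, hval]
              have hpow : (-1 : ℚ) ^ (n + 2 - i.val + m.val) =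
                  (-1 : ℚ) ^ (n + 2 - (i.val + 1) + m.val) * (-1) := by
                have h' : n + 2 - i.val + m.val = (n + 2 - (i.val + 1) + m.val) + 1 := by omega
                rw [h', pow_succ]
              rw [hpow]
              field_simp
              ring
          · by_cases him : i = m
            · subst him
              rw [if_pos (le_refl i),
                  if_pos (show i + 1 ≤ i from by rw [Fin.le_def]; omega),
                  if_pos rfl]
              have hIoi : Finset.Ioi i = (∅ : Finset (Fin (n + 2))) := by
                ext l
                have := l.isLt
                simp only [Finset.mem_Ioi, Finset.notMem_empty, iff_false, Fin.lt_def]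
                omega
              have hIio0 : Finset.Iio (i + 1) = (∅ : Finset (Fin (n + 2))) := by
                ext l
                simp only [Finset.mem_Iio, Finset.notMem_empty, iff_false, Fin.lt_def, hval]
                omega
              have hexp : i.val - (i + 1).val = n + 1 := by rw [hval, hlast]; omega
              have hsplit : ∏ l, (b l : ℚ) =
                  (∏ l ∈ Finset.Iio i, (b l : ℚ)) * (b i : ℚ) := by
                have hu : (Finset.univ : Finset (Fin (n + 2))) = insert i (Finset.Iio i) := by
                  ext l
                  have := l.isLt
                  simp only [Finset.mem_univ, Finset.mem_insert, Finset.mem_Iio,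
                    Fin.lt_def, Fin.ext_iff, true_iff]
                  omega
                rw [hu, Finset.prod_insert (by simp)]
                ring
              rw [hIoi, hIio0, hexp, Finset.prod_empty]
              simp only [Nat.sub_self, pow_zero]
              field_simp
              rw [hΔdef, hsplit]
              have : n + 2 - 1 = n + 1 := rfl
              rw [this]
              ring
            · have hmv : m.val < i.val := by
                have h1 := m.isLt
                have h2 : m.val ≠ i.val := fun h => him (Fin.ext h).symm
                omega
              rw [if_neg (show ¬ i ≤ m from by rw [Fin.le_def]; omega),
                  if_pos (show i + 1 ≤ m from by rw [Fin.le_def, hval]; omega),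
                  if_neg him]
              have hIio0 : Finset.Iio (i + 1) = (∅ : Finset (Fin (n + 2))) := by
                ext l
                simp only [Finset.mem_Iio, Finset.notMem_empty, iff_false, Fin.lt_def, hval]
                omega
              have hIoi : ∏ l ∈ Finset.Ioi m, (b l : ℚ) =
                  (∏ l ∈ Finset.Ioo m i, (b l : ℚ)) * (b i : ℚ) := by
                have hins : Finset.Ioi m = insert i (Finset.Ioo m i) := by
                  ext l
                  have := l.isLt
                  simp only [Finset.mem_Ioi, Finset.mem_insert, Finset.mem_Ioo,
                    Fin.lt_def, Fin.ext_iff]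
                  omega
                rw [hins, Finset.prod_insert (by simp only [Finset.mem_Ioo, Fin.lt_def, not_and]; omega)]
                ring
              have hexp1 : n + 2 - i.val + m.val = m.val + 1 := by omega
              have hexp2 : m.val - (i + 1).val = m.val := by rw [hval]; omega
              rw [hIio0, hIoi, hexp1, hexp2, Finset.prod_empty, pow_succ]
              field_simp
              ring
  have hmul' : B * A = 1 := mul_eq_one_comm.mp hmul
  refine ⟨⟨⟨A, B, hmul, hmul'⟩, rfl⟩, ?_⟩
  intro i j
  rw [Matrix.inv_eq_right_inv hmul, hB]
  rfl
end

section
/- Let k ≥ 2 be an integer and let b_1, …, b_k be integers with b_i ≥ 2 for all i, and let A_loop be the associated loop matrix over ℚ. Then for every i and j (indices taken cyclically in {1,…,k}, so that i+1 means 1 when i = k): (A_loop^{-1})_{i+1, j} = −b_i·(A_loop^{-1})_{i,j} if j ≠ i, and (A_loop^{-1})_{i+1, i} = −b_i·(A_loop^{-1})_{i,i} + 1. In particular, each row of A_loop^{-1} is −b_i times the previous row modulo ℤ. -/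
lemma loop_cond_iff {k : ℕ} [NeZero k] (hk : 2 ≤ k) (i j : Fin k) :
    (j.val = i.val + 1 ∨ (i.val = k - 1 ∧ j.val = 0)) ↔ j = i + 1 := by
  have hi := i.isLt
  have hj := j.isLt
  have h1 : (1 : Fin k).val = 1 := by
    simp [Fin.val_one', Nat.mod_eq_of_lt (by omega : 1 < k)]
  have hadd : (i + 1).val = (i.val + 1) % k := by
    rw [Fin.add_def, h1]
  rw [Fin.ext_iff, hadd]
  by_cases hcase : i.val = k - 1
  · have : (i.val + 1) % k = 0 := by
      have : i.val + 1 = k := by omega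
      simp [this]
    rw [this]
    omega
  · have : (i.val + 1) % k = i.val + 1 := Nat.mod_eq_of_lt (by omega)
    rw [this]
    omega

lemma loopMatrix_decomp {k : ℕ} [NeZero k] (hk : 2 ≤ k) (b : Fin k → ℚ) :
    loopMatrix b =
      Matrix.diagonal b + ((Equiv.addRight (1 : Fin k)).toPEquiv.toMatrix) := by
  have h10 : (1 : Fin k) ≠ 0 := by
    simp [Fin.ext_iff, Fin.val_one', Nat.mod_eq_of_lt (by omega : 1 < k)]
  ext i j
  simp only [loopMatrix, Matrix.of_apply, Matrix.add_apply, Matrix.diagonal_apply,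
    PEquiv.toMatrix_apply, Equiv.toPEquiv_apply, Option.mem_def, Option.some.injEq,
    Equiv.coe_addRight]
  by_cases hij : i = j
  · subst hij
    have hne : i + 1 ≠ i := by
      intro h
      exact h10 (add_eq_left.mp h)
    simp [hne]
  · rw [if_neg hij, if_neg hij]
    by_cases hj : j = i + 1
    · rw [if_pos ((loop_cond_iff hk i j).mpr hj), if_pos hj.symm]; ring
    · rw [if_neg (fun h => hj ((loop_cond_iff hk i j).mp h)), if_neg (fun h => hj h.symm)]; ring

lemma loopMatrix_mul_apply {k : ℕ} [NeZero k] (hk : 2 ≤ k) (b : Fin k → ℚ)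
    (N : Matrix (Fin k) (Fin k) ℚ) (i j : Fin k) :
    (loopMatrix b * N) i j = b i * N i j + N (i + 1) j := by
  rw [loopMatrix_decomp hk, Matrix.add_mul, Matrix.add_apply, Matrix.diagonal_mul,
    PEquiv.toMatrix_toPEquiv_mul]
  simp [Matrix.submatrix_apply]

lemma loopMatrix_det_isUnit {k : ℕ} [NeZero k] (hk : 2 ≤ k) (b : Fin k → ℤ)
    (hb : ∀ i, 2 ≤ b i) : IsUnit (loopMatrix fun l => (b l : ℚ)).det := by
  rw [isUnit_iff_ne_zero]
  intro hdet
  obtain ⟨v, hv, hmv⟩ := (Matrix.exists_mulVec_eq_zero_iff).mpr hdet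
  have key : ∀ i : Fin k, (b i : ℚ) * v i + v (i + 1) = 0 := by
    intro i
    have := congrFun hmv i
    rw [loopMatrix_decomp hk, Matrix.add_mulVec, Pi.add_apply,
      Matrix.mulVec_diagonal] at this
    have hperm : ((Equiv.addRight (1 : Fin k)).toPEquiv.toMatrix.mulVec v) i = v (i + 1) := by
      classical
      simp [Matrix.mulVec, dotProduct, PEquiv.toMatrix_apply, Equiv.toPEquiv_apply,
        Equiv.coe_addRight]
    rw [hperm] at this
    simpa using this
  obtain ⟨i0, hmax⟩ := Finite.exists_max fun i : Fin k => |v i|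
  have hb0 : (2 : ℚ) ≤ |(b i0 : ℚ)| := by
    have := hb i0
    rw [abs_of_pos (by exact_mod_cast lt_of_lt_of_le (by norm_num) this)]
    exact_mod_cast this
  have h1 : |v (i0 + 1)| = |(b i0 : ℚ)| * |v i0| := by
    have : v (i0 + 1) = -((b i0 : ℚ) * v i0) := by linarith [key i0]
    rw [this, abs_neg, abs_mul]
  have h2 : |v (i0 + 1)| ≤ |v i0| := hmax _
  have h3 : 2 * |v i0| ≤ |(b i0 : ℚ)| * |v i0| :=
    mul_le_mul_of_nonneg_right hb0 (abs_nonneg _)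
  have h4 : |v i0| ≤ 0 := by linarith
  have h5 : ∀ i, v i = 0 := fun i =>
    abs_nonpos_iff.mp (le_trans (hmax i) h4)
  exact hv (funext h5)

/-- Each row of the inverse of the loop matrix is `-b i` times the previous row, except
in the diagonal spot: with indices taken cyclically (Fin k addition),
`(A⁻¹) (i+1) j = -b i * (A⁻¹) i j` for `j ≠ i`, and
`(A⁻¹) (i+1) i = -b i * (A⁻¹) i i + 1`. -/
theorem loopMatrix_inv_row_recursion {k : ℕ} [NeZero k] (hk : 2 ≤ k) (b : Fin k → ℤ)
    (hb : ∀ i, 2 ≤ b i) :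
    ∀ i j : Fin k,
      (j ≠ i →
        (loopMatrix fun l => (b l : ℚ))⁻¹ (i + 1) j =
          -(b i : ℚ) * (loopMatrix fun l => (b l : ℚ))⁻¹ i j) ∧
      (loopMatrix fun l => (b l : ℚ))⁻¹ (i + 1) i =
        -(b i : ℚ) * (loopMatrix fun l => (b l : ℚ))⁻¹ i i + 1 := by
  intro i j
  set A := loopMatrix fun l => (b l : ℚ) with hA
  have hdet := loopMatrix_det_isUnit hk b hb
  have hmul : A * A⁻¹ = 1 := Matrix.mul_nonsing_inv _ hdet
  have key : ∀ c : Fin k, (b i : ℚ) * A⁻¹ i c + A⁻¹ (i + 1) c =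
      if i = c then 1 else 0 := by
    intro c
    have := congrFun (congrFun hmul i) c
    rw [loopMatrix_mul_apply hk] at this
    rw [this, Matrix.one_apply]
  constructor
  · intro hji
    have := key j
    rw [if_neg (fun h => hji h.symm)] at this
    linarith
  · have := key i
    rw [if_pos rfl] at this
    linarith
end

section
/- Let k ≥ 2 be an integer, let b_1, …, b_k be integers with b_i ≥ 2, let A_loop be the associated loop matrix over ℚ, and let q := A_loop^{-1}·𝟙 where 𝟙 is the all-ones vector (so q_i is the i-th row sum of A_loop^{-1}, the i-th charge). Then for all indices 1 ≤ i < j ≤ k, the rational number q_j − (−1)^{j−i}·(b_i·b_{i+1}⋯b_{j−1})·q_i is an integer. -/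
/-- Let `q i` be the `i`-th row sum of the inverse of the loop matrix (the `i`-th charge).
Then for `i < j`, the rational number `q j - (-1)^(j-i) * (b i * ⋯ * b (j-1)) * q i`
is an integer. -/
theorem loopMatrix_charge_congruence {k : ℕ} (hk : 2 ≤ k) (b : Fin k → ℤ)
    (hb : ∀ i, 2 ≤ b i)
    (q : Fin k → ℚ)
    (hq : ∀ i, q i = ∑ j, (loopMatrix fun l => (b l : ℚ))⁻¹ i j) :
    ∀ i j : Fin k, i < j →
      ∃ z : ℤ,
        q j - (-1 : ℚ) ^ (j.val - i.val) * (∏ l ∈ Finset.Ico i j, (b l : ℚ)) * q i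
          = z := by
  intro i j hij
  set A : Matrix (Fin k) (Fin k) ℚ := loopMatrix (fun l => (b l : ℚ)) with hAdef
  by_cases hU : IsUnit A.det
  · -- invertible case
    have key : ∀ m : Fin k, ∀ hm : m.val + 1 < k,
        (b m : ℚ) * q m + q ⟨m.val + 1, hm⟩ = 1 := by
      intro m hm
      have hrow : ∑ jj, A m jj * q jj = 1 := by
        have h1 : A * A⁻¹ = 1 := Matrix.mul_nonsing_inv A hU
        have h2 : ∀ jj, q jj = (A⁻¹.mulVec (fun _ => 1)) jj := by
          intro jj; rw [hq]; simp [Matrix.mulVec, dotProduct, hAdef]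
        calc ∑ jj, A m jj * q jj = (A.mulVec (A⁻¹.mulVec fun _ => 1)) m := by
              simp only [Matrix.mulVec, dotProduct]
              exact Finset.sum_congr rfl fun jj _ => by
                rw [h2 jj]; simp [Matrix.mulVec, dotProduct]
          _ = 1 := by
              rw [Matrix.mulVec_mulVec, h1]
              simp [Matrix.mulVec, dotProduct, Matrix.one_apply]
      have hmne : m ≠ (⟨m.val + 1, by omega⟩ : Fin k) := by
        intro hcon; have := congrArg Fin.val hcon; simp at this
      have hsplit : ∀ jj : Fin k, A m jj * q jj =
          (if jj = m then (b m : ℚ) * q m else 0) +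
          (if jj = (⟨m.val + 1, by omega⟩ : Fin k) then q jj else 0) := by
        intro jj
        rcases eq_or_ne jj m with h | h
        · subst h
          simp [hAdef, loopMatrix, hmne, Ne.symm hmne]
        · rcases eq_or_ne jj (⟨m.val + 1, by omega⟩ : Fin k) with h2 | h2
          · subst h2
            have : A m ⟨m.val + 1, by omega⟩ = 1 := by
              simp [hAdef, loopMatrix, hmne]
            rw [this]; simp [Ne.symm hmne]
          · have hv1 : jj.val ≠ m.val + 1 := by
              intro hcon; exact h2 (Fin.ext hcon)
            have hv2 : m.val ≠ k - 1 := by omega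
            have : A m jj = 0 := by
              simp [hAdef, loopMatrix, Ne.symm h, hv1, hv2]
            rw [this]; simp [h, h2]
      rw [Finset.sum_congr rfl (fun jj _ => hsplit jj), Finset.sum_add_distrib,
        Finset.sum_ite_eq', Finset.sum_ite_eq'] at hrow
      simpa using hrow
    have main : ∀ n, i.val + 1 ≤ n → ∀ (hn : n < k),
        ∃ z : ℤ, q ⟨n, hn⟩ - (-1 : ℚ) ^ (n - i.val) *
          (∏ l ∈ Finset.Ico i ⟨n, hn⟩, (b l : ℚ)) * q i = z := by
      intro n hn
      induction n, hn using Nat.le_induction with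
      | base =>
        intro hn
        have hIco : Finset.Ico i (⟨i.val + 1, hn⟩ : Fin k) = {i} := by
          ext l
          simp only [Finset.mem_Ico, Finset.mem_singleton, Fin.le_def, Fin.lt_def, Fin.val_mk]
          constructor
          · rintro ⟨h1, h2⟩; exact Fin.ext (by omega)
          · rintro rfl; omega
        have hkey := key i hn
        refine ⟨1, ?_⟩
        rw [hIco]
        simp only [Finset.prod_singleton, Nat.add_sub_cancel_left, pow_one]
        push_cast
        linarith [hkey]
      | succ n hn ih =>
        intro hn1
        have hnk : n < k := by omega
        obtain ⟨z, hz⟩ := ih hnk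
        have hkey := key ⟨n, hnk⟩ hn1
        have hIco : Finset.Ico i (⟨n + 1, hn1⟩ : Fin k) =
            insert (⟨n, hnk⟩ : Fin k) (Finset.Ico i ⟨n, hnk⟩) := by
          ext l
          simp only [Finset.mem_Ico, Finset.mem_insert, Fin.le_def, Fin.lt_def, Fin.val_mk]
          constructor
          · rintro ⟨h1, h2⟩
            rcases eq_or_lt_of_le (Nat.lt_succ_iff.mp h2) with h3 | h3
            · exact Or.inl (Fin.ext h3)
            · exact Or.inr ⟨h1, h3⟩
          · rintro (rfl | ⟨h1, h2⟩)
            · simp only [Fin.val_mk]; omega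
            · omega
        have hnotmem : (⟨n, hnk⟩ : Fin k) ∉ Finset.Ico i (⟨n, hnk⟩ : Fin k) := by
          simp
        refine ⟨1 - b ⟨n, hnk⟩ * z, ?_⟩
        rw [hIco, Finset.prod_insert hnotmem]
        have hpow : (n + 1 - i.val) = (n - i.val) + 1 := by omega
        rw [hpow, pow_succ]
        have hq1 : q (⟨n + 1, hn1⟩ : Fin k) = 1 - (b ⟨n, hnk⟩ : ℚ) * q ⟨n, hnk⟩ := by
          have : (⟨(⟨n, hnk⟩ : Fin k).val + 1, hn1⟩ : Fin k) = ⟨n + 1, hn1⟩ := rfl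
          rw [this] at hkey; linarith
        have hq2 : q (⟨n, hnk⟩ : Fin k) = z + (-1 : ℚ) ^ (n - i.val) *
            (∏ l ∈ Finset.Ico i ⟨n, hnk⟩, (b l : ℚ)) * q i := by linarith
        rw [hq1, hq2]
        push_cast
        ring
    have hij' : i.val + 1 ≤ j.val := Fin.lt_def.mp hij
    obtain ⟨z, hz⟩ := main j.val hij' j.isLt
    exact ⟨z, by simpa using hz⟩
  · -- singular case: inverse is zero, so all q are zero
    have h0 : A⁻¹ = 0 := Matrix.nonsing_inv_apply_not_isUnit A hU
    have hq0 : ∀ m, q m = 0 := by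
      intro m; rw [hq]
      simp [← hAdef, h0]
    exact ⟨0, by simp [hq0]⟩
end

section
/- Let k ≥ 3 be an integer, let b_1, …, b_k be integers with b_i ≥ 2, let A_loop be the associated loop matrix over ℚ, and let q := A_loop^{-1}·𝟙 be the vector of row sums of A_loop^{-1}. Suppose there is a positive integer d such that for every i, d·q_i is an integer with 0 < d·q_i < d. Then for every i with 1 ≤ i ≤ k−2, one has q_{k−1}·(A_loop^{-1})_{i,k} ≥ q_i·(A_loop^{-1})_{k−1,k}. -/
set_option maxHeartbeats 2000000 in
/-- Let `q` be the vector of row sums of the inverse of the loop matrix (the charges).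
If there is a positive integer `d` such that every `d * q i` is an integer strictly
between `0` and `d`, then for all `i ≤ k - 3` (0-indexed; `1 ≤ i ≤ k-2` 1-indexed),
`q (k-2) * (A⁻¹) i (k-1) ≥ q i * (A⁻¹) (k-2) (k-1)`. -/
theorem loopMatrix_lastColumn_cone {k : ℕ} (hk : 3 ≤ k) (b : Fin k → ℤ)
    (hb : ∀ i, 2 ≤ b i)
    (q : Fin k → ℚ)
    (hq : ∀ i, q i = ∑ j, (loopMatrix fun l => (b l : ℚ))⁻¹ i j)
    (d : ℕ) (hd : 0 < d)
    (hint : ∀ i, ∃ m : ℤ, (d : ℚ) * q i = m ∧ 0 < m ∧ m < d) :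
    ∀ i : Fin k, i.val < k - 2 →
      q i * (loopMatrix fun l => (b l : ℚ))⁻¹ ⟨k - 2, by omega⟩ ⟨k - 1, by omega⟩ ≤
        q ⟨k - 2, by omega⟩ * (loopMatrix fun l => (b l : ℚ))⁻¹ i ⟨k - 1, by omega⟩ := by
  haveI : NeZero k := ⟨by omega⟩
  set A : Matrix (Fin k) (Fin k) ℚ := loopMatrix fun l => ((b l : ℚ)) with hA
  have hd0 : (0:ℚ) < d := by exact_mod_cast hd
  have hq0 : ∀ i, 0 < q i := by
    intro i; obtain ⟨mm, hm, hm0, _⟩ := hint i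
    have h1 : (0:ℚ) < (d:ℚ) * q i := by rw [hm]; exact_mod_cast hm0
    nlinarith
  have hq1lt : ∀ i, q i < 1 := by
    intro i; obtain ⟨mm, hm, _, hm2⟩ := hint i
    have h1 : (d:ℚ) * q i < (d:ℚ) := by rw [hm]; exact_mod_cast hm2
    nlinarith
  have hdet : IsUnit A.det := by
    by_contra h
    have hN : A⁻¹ = 0 := Matrix.nonsing_inv_apply_not_isUnit A h
    have h0 : q ⟨0, by omega⟩ = 0 := by rw [hq, hN]; simp
    have := hq0 ⟨0, by omega⟩
    rw [h0] at this; exact lt_irrefl _ this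
  have hAN : A * A⁻¹ = 1 := Matrix.mul_nonsing_inv A hdet
  -- value of one in Fin k
  have hone : ((1 : Fin k) : ℕ) = 1 := by
    rw [Fin.val_one']; exact Nat.mod_eq_of_lt (by omega)
  have hsucc : ∀ i : Fin k, ((i + 1 : Fin k) : ℕ) = (i.val + 1) % k := by
    intro i; rw [Fin.val_add, hone]
  have hne : ∀ i : Fin k, i ≠ i + 1 := by
    intro i h
    have h2 := congrArg Fin.val h
    rw [hsucc] at h2
    rcases Nat.lt_or_ge (i.val + 1) k with h1 | h1
    · rw [Nat.mod_eq_of_lt h1] at h2; omega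
    · have hik : i.val + 1 = k := by have := i.isLt; omega
      rw [hik, Nat.mod_self] at h2; omega
  -- row sum formula for A
  have hsum : ∀ (v : Fin k → ℚ) (i : Fin k),
      ∑ j, A i j * v j = (b i : ℚ) * v i + v (i + 1) := by
    intro v i
    have key : ∀ j : Fin k, A i j * v j =
        (if j = i then (b i : ℚ) * v i else 0) + (if j = i + 1 then v (i + 1) else 0) := by
      intro j
      by_cases h1 : j = i
      · subst h1
        have hAe : A j j = (b j : ℚ) := by simp [hA, loopMatrix]
        rw [hAe, if_pos rfl, if_neg (fun h => hne j h)]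
        ring
      · by_cases h2 : j = i + 1
        · subst h2
          have hcond : ((i+1 : Fin k)).val = i.val + 1 ∨ (i.val = k - 1 ∧ ((i+1 : Fin k)).val = 0) := by
            rcases Nat.lt_or_ge (i.val + 1) k with hl | hl
            · left; rw [hsucc, Nat.mod_eq_of_lt hl]
            · right
              have hik : i.val + 1 = k := by have := i.isLt; omega
              exact ⟨by omega, by rw [hsucc, hik, Nat.mod_self]⟩
          have hAe : A i (i+1) = 1 := by
            show (loopMatrix fun l => ((b l : ℚ))) i (i+1) = 1
            simp only [loopMatrix, Matrix.of_apply]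
            rw [if_neg (fun h => h1 h.symm), if_pos hcond]
          rw [hAe, if_neg h1, if_pos rfl]
          ring
        · have hcond : ¬ (j.val = i.val + 1 ∨ (i.val = k - 1 ∧ j.val = 0)) := by
            intro hc
            apply h2
            apply Fin.ext
            rw [hsucc]
            rcases hc with hc | ⟨hc1, hc2⟩
            · rw [hc, Nat.mod_eq_of_lt (by rw [← hc]; exact j.isLt)]
            · have : i.val + 1 = k := by omega
              rw [this, Nat.mod_self, hc2]
          have hAe : A i j = 0 := by
            show (loopMatrix fun l => ((b l : ℚ))) i j = 0
            simp only [loopMatrix, Matrix.of_apply]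
            rw [if_neg (fun h => h1 h.symm), if_neg hcond]
          rw [hAe, if_neg h1, if_neg h2]
          ring
    calc ∑ j, A i j * v j
        = ∑ j : Fin k, ((if j = i then (b i : ℚ) * v i else 0) + (if j = i + 1 then v (i + 1) else 0)) :=
          Finset.sum_congr rfl fun j _ => key j
      _ = (b i : ℚ) * v i + v (i + 1) := by
          rw [Finset.sum_add_distrib]
          simp
  -- recursion for q
  have hqrec : ∀ i : Fin k, (b i : ℚ) * q i + q (i + 1) = 1 := by
    intro i
    have h1 : ∑ j, A i j * q j = 1 := by
      calc ∑ j, A i j * q j = ∑ j, ∑ l, A i j * A⁻¹ j l := by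
            refine Finset.sum_congr rfl fun j _ => ?_
            rw [hq j, Finset.mul_sum]
        _ = ∑ l, ∑ j, A i j * A⁻¹ j l := Finset.sum_comm
        _ = ∑ l, (A * A⁻¹) i l := by
            refine Finset.sum_congr rfl fun l _ => ?_
            rw [Matrix.mul_apply]
        _ = 1 := by rw [hAN]; simp [Matrix.one_apply]
    rw [hsum q i] at h1
    exact h1
  -- the last column of the inverse
  set lst : Fin k := ⟨k - 1, by omega⟩ with hlst
  set x : Fin k → ℚ := fun j => A⁻¹ j lst with hxdef
  have hxrec : ∀ i : Fin k, (b i : ℚ) * x i + x (i + 1) = if i = lst then 1 else 0 := by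
    intro i
    have h1 := congrFun (congrFun hAN i) lst
    rw [Matrix.mul_apply] at h1
    have h2 : ∑ j, A i j * x j = (1 : Matrix (Fin k) (Fin k) ℚ) i lst := h1
    rw [hsum x i] at h2
    rw [h2, Matrix.one_apply]
  -- step versions on ℕ indices
  have hstep_eq : ∀ (n : ℕ) (h : n + 1 < k), (⟨n, by omega⟩ : Fin k) + 1 = ⟨n + 1, h⟩ := by
    intro n h
    apply Fin.ext
    rw [hsucc]
    exact Nat.mod_eq_of_lt h
  have hqstep : ∀ (n : ℕ) (h : n + 1 < k),
      q ⟨n + 1, h⟩ = 1 - (b ⟨n, by omega⟩ : ℚ) * q ⟨n, by omega⟩ := by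
    intro n h
    have := hqrec ⟨n, by omega⟩
    rw [hstep_eq n h] at this
    linarith
  have hxstep : ∀ (n : ℕ) (h : n + 1 < k),
      x ⟨n + 1, h⟩ = -(b ⟨n, by omega⟩ : ℚ) * x ⟨n, by omega⟩ := by
    intro n h
    have h2 := hxrec ⟨n, by omega⟩
    rw [hstep_eq n h] at h2
    rw [if_neg (by intro hc; have := congrArg Fin.val hc; simp [hlst] at this; omega)] at h2
    linarith
  -- nat-indexed b and partial products
  set bb : ℕ → ℚ := fun n => if h : n < k then (b ⟨n, h⟩ : ℚ) else 1 with hbb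
  have hbbeq : ∀ (n : ℕ) (h : n < k), bb n = (b ⟨n, h⟩ : ℚ) := by
    intro n h; simp [hbb, h]
  have hbb2 : ∀ (n : ℕ), n < k → (2:ℚ) ≤ bb n := by
    intro n h; rw [hbbeq n h]; exact_mod_cast hb _
  have hbbpos : ∀ n : ℕ, (0:ℚ) < bb n := by
    intro n
    by_cases h : n < k
    · linarith [hbb2 n h]
    · simp [hbb, h]
  set P : ℕ → ℚ := fun n => ∏ l ∈ Finset.range n, bb l with hP
  have hPpos : ∀ n, 0 < P n := by
    intro n; exact Finset.prod_pos (fun l _ => hbbpos l)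
  -- two-step inequality for q
  have hq2 : ∀ (n : ℕ) (h : n + 2 < k),
      q ⟨n + 2, h⟩ ≤ bb n * bb (n+1) * q ⟨n, by omega⟩ := by
    intro n h
    have e1 := hqstep n (by omega)
    have e2 := hqstep (n+1) (by omega)
    rw [e2, e1, hbbeq n (by omega), hbbeq (n+1) (by omega)]
    have h2 : (2:ℚ) ≤ (b (⟨n+1, by omega⟩ : Fin k) : ℚ) := by exact_mod_cast hb _
    nlinarith
  -- chained inequality for q
  have hqchain : ∀ (t n : ℕ) (h : n + 2 * t < k),
      q ⟨n + 2 * t, h⟩ ≤ (∏ l ∈ Finset.Ico n (n + 2 * t), bb l) * q ⟨n, by omega⟩ := by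
    intro t
    induction t with
    | zero =>
        intro n h
        simp
    | succ t ih =>
        intro n h
        have h' : (n + 2) + 2 * t < k := by omega
        have e1 : (⟨n + 2 * (t+1), h⟩ : Fin k) = ⟨(n+2) + 2 * t, h'⟩ := Fin.mk_eq_mk.mpr (by ring)
        rw [e1]
        have h2 := ih (n+2) h'
        have h3 := hq2 n (by omega)
        have hprodpos : (0:ℚ) ≤ ∏ l ∈ Finset.Ico (n+2) (n+2+2*t), bb l :=
          le_of_lt (Finset.prod_pos (fun l _ => hbbpos l))
        have h4 : (∏ l ∈ Finset.Ico (n+2) (n+2+2*t), bb l) * q ⟨n+2, by omega⟩ ≤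
            (∏ l ∈ Finset.Ico (n+2) (n+2+2*t), bb l) * (bb n * bb (n+1) * q ⟨n, by omega⟩) :=
          mul_le_mul_of_nonneg_left h3 hprodpos
        have h5 : (∏ l ∈ Finset.Ico n (n+2), bb l) = bb n * bb (n+1) := by
          rw [Finset.prod_Ico_eq_prod_range]
          simp [Finset.prod_range_succ]
        have hE : n + 2*(t+1) = n+2+2*t := by omega
        have h6 : (∏ l ∈ Finset.Ico n (n+2), bb l) * ∏ l ∈ Finset.Ico (n+2) (n+2+2*t), bb l
            = ∏ l ∈ Finset.Ico n (n + 2*(t+1)), bb l := by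
          rw [hE]
          exact Finset.prod_Ico_consecutive bb (by omega) (by omega)
        calc q ⟨(n+2) + 2*t, h'⟩ ≤ (∏ l ∈ Finset.Ico (n+2) (n+2+2*t), bb l) * q ⟨n+2, by omega⟩ := h2
          _ ≤ (∏ l ∈ Finset.Ico (n+2) (n+2+2*t), bb l) * (bb n * bb (n+1) * q ⟨n, by omega⟩) := h4
          _ = (∏ l ∈ Finset.Ico n (n + 2*(t+1)), bb l) * q ⟨n, by omega⟩ := by
              rw [← h6, h5]; ring
  -- product formula for x
  have hxform : ∀ (n : ℕ) (h : n < k),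
      x ⟨n, h⟩ = (-1)^n * P n * x ⟨0, by omega⟩ := by
    intro n
    induction n with
    | zero => intro h; simp [hP]
    | succ n ih =>
        intro h
        have hn : n < k := by omega
        rw [hxstep n h, ih hn, ← hbbeq n hn]
        have : P (n+1) = P n * bb n := by
          rw [hP]; exact Finset.prod_range_succ bb n
        rw [this]
        ring
  -- wrap-around equation: sign of x 0
  have hsq : ((-1:ℚ)^(k-1)) * ((-1:ℚ)^(k-1)) = 1 := by
    rw [← pow_add]
    exact Even.neg_one_pow (Even.add_self _)
  have hwrap : (1 + (-1:ℚ)^(k-1) * P k) * x ⟨0, by omega⟩ = 1 := by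
    have h1 := hxrec lst
    rw [if_pos rfl] at h1
    have h2 : lst + 1 = (⟨0, by omega⟩ : Fin k) := by
      apply Fin.ext
      rw [hsucc]
      show (k - 1 + 1) % k = 0
      have : k - 1 + 1 = k := by omega
      rw [this, Nat.mod_self]
    rw [h2] at h1
    have h3 : x lst = (-1:ℚ)^(k-1) * P (k-1) * x ⟨0, by omega⟩ := hxform (k-1) (by omega)
    have h4 : P k = P (k-1) * bb (k-1) := by
      have h5 : k - 1 + 1 = k := by omega
      show P k = _
      rw [← h5]
      exact Finset.prod_range_succ bb (k-1)
    have h5 : (b lst : ℚ) = bb (k-1) := (hbbeq (k-1) (by omega)).symm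
    rw [h3, h5] at h1
    rw [h4]
    nlinarith [h1]
  obtain ⟨s, hs⟩ : ∃ s : ℚ, s = (-1:ℚ)^(k-1) * x ⟨0, by omega⟩ := ⟨_, rfl⟩
  have hx0s : x ⟨0, by omega⟩ = (-1:ℚ)^(k-1) * s := by
    rw [hs, ← mul_assoc, hsq, one_mul]
  have hbb1 : ∀ n : ℕ, (1:ℚ) ≤ bb n := by
    intro n
    by_cases h : n < k
    · linarith [hbb2 n h]
    · simp [hbb, h]
  have hPk2 : (2:ℚ) ≤ P k := by
    have h1 : (1:ℚ) ≤ P (k-1) := by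
      show (1:ℚ) ≤ ∏ l ∈ Finset.range (k-1), bb l
      calc (1:ℚ) = ∏ _l ∈ Finset.range (k-1), (1:ℚ) := by simp
        _ ≤ ∏ l ∈ Finset.range (k-1), bb l :=
            Finset.prod_le_prod (fun l _ => zero_le_one) (fun l _ => hbb1 l)
    have h2 : P k = P (k-1) * bb (k-1) := by
      have h5 : k - 1 + 1 = k := by omega
      show P k = _
      rw [← h5]
      exact Finset.prod_range_succ bb (k-1)
    rw [h2]
    nlinarith [hbb2 (k-1) (by omega : k - 1 < k)]
  have hspos : 0 < s := by
    rcases Nat.even_or_odd (k-1) with he | ho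
    · rw [he.neg_one_pow] at hwrap
      rw [hs, he.neg_one_pow, one_mul]
      nlinarith [hwrap, hPk2]
    · rw [ho.neg_one_pow] at hwrap
      rw [hs, ho.neg_one_pow]
      nlinarith [hwrap, hPk2]
  -- general formula x n = (-1)^(n + (k-1)) * P n * s
  have hxform2 : ∀ (n : ℕ) (h : n < k),
      x ⟨n, h⟩ = (-1:ℚ)^(n + (k-1)) * P n * s := by
    intro n h
    rw [hxform n h, hx0s, pow_add]
    ring
  -- x (k-2) is negative
  have hoddk : Odd ((k-2) + (k-1)) := ⟨k - 2, by omega⟩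
  have hxk2 : x ⟨k-2, by omega⟩ = -(P (k-2) * s) := by
    rw [hxform2 (k-2) (by omega), hoddk.neg_one_pow]
    ring
  -- main goal
  intro i hi
  obtain ⟨n, hnk⟩ := i
  have hi' : n < k - 2 := hi
  show q ⟨n, hnk⟩ * x ⟨k-2, by omega⟩ ≤ q ⟨k-2, by omega⟩ * x ⟨n, hnk⟩
  have hxi : x ⟨n, hnk⟩ = (-1:ℚ)^(n + (k-1)) * P n * s := hxform2 n hnk
  have hqi : 0 < q ⟨n, hnk⟩ := hq0 _
  have hqk2 : 0 < q (⟨k-2, by omega⟩ : Fin k) := hq0 _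
  rcases Nat.even_or_odd (n + (k-1)) with he | ho
  · -- x i > 0, LHS < 0 ≤ RHS
    rw [hxk2, hxi, he.neg_one_pow]
    have h1 : 0 < P n * s := mul_pos (hPpos n) hspos
    have h2 : 0 < P (k-2) * s := mul_pos (hPpos (k-2)) hspos
    nlinarith
  · -- same parity case: use the q chain
    rw [hxk2, hxi, ho.neg_one_pow]
    obtain ⟨t, ht⟩ : ∃ t, k - 2 = n + 2 * t := by
      obtain ⟨m, hm⟩ := ho
      exact ⟨(k - 2 - n) / 2, by omega⟩
    have hchain := hqchain t n (by omega)
    have hidx : (⟨n + 2*t, by omega⟩ : Fin k) = (⟨k-2, by omega⟩ : Fin k) :=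
      Fin.mk_eq_mk.mpr ht.symm
    rw [hidx] at hchain
    have hqin : q (⟨n, by omega⟩ : Fin k) = q ⟨n, hnk⟩ := rfl
    rw [hqin] at hchain
    have hsplit : P n * (∏ l ∈ Finset.Ico n (n + 2*t), bb l) = P (k-2) := by
      show (∏ l ∈ Finset.range n, bb l) * (∏ l ∈ Finset.Ico n (n+2*t), bb l)
          = ∏ l ∈ Finset.range (k-2), bb l
      rw [Finset.range_eq_Ico, Finset.prod_Ico_consecutive bb (by omega) (by omega),
        ← Finset.range_eq_Ico]
      rw [ht]
    have hprodpos : 0 < ∏ l ∈ Finset.Ico n (n + 2*t), bb l :=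
      Finset.prod_pos (fun l _ => hbbpos l)
    have h1 : q (⟨k-2, by omega⟩ : Fin k) * (P n * s) ≤
        ((∏ l ∈ Finset.Ico n (n + 2*t), bb l) * q ⟨n, hnk⟩) * (P n * s) :=
      mul_le_mul_of_nonneg_right hchain (le_of_lt (mul_pos (hPpos n) hspos))
    have h2 : ((∏ l ∈ Finset.Ico n (n + 2*t), bb l) * q ⟨n, hnk⟩) * (P n * s)
        = q ⟨n, hnk⟩ * (P (k-2) * s) := by
      rw [← hsplit]; ring
    rw [h2] at h1
    linarith
end
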